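/- All eigenvalues of the 4×4 matrix J(E₃) given in equation (29) have negative real parts if R_{0w} > 1 and μ_w̄ > ρ₂ μ_w. -/

import Mathlib

open Polynomial

set_option maxHeartbeats 1000000 in
lemma my_det_fin_four (M : Matrix (Fin 4) (Fin 4) ℂ) :
    M.det =
      M 0 0 * (M 1 1 * (M 2 2 * M 3 3 - M 2 3 * M 3 2)
              - M 1 2 * (M 2 1 * M 3 3 - M 2 3 * M 3 1)
              + M 1 3 * (M 2 1 * M 3 2 - M 2 2 * M 3 1))
    - M 0 1 * (M 1 0 * (M 2 2 * M 3 3 - M 2 3 * M 3 2)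
              - M 1 2 * (M 2 0 * M 3 3 - M 2 3 * M 3 0)
              + M 1 3 * (M 2 0 * M 3 2 - M 2 2 * M 3 0))
    + M 0 2 * (M 1 0 * (M 2 1 * M 3 3 - M 2 3 * M 3 1)
              - M 1 1 * (M 2 0 * M 3 3 - M 2 3 * M 3 0)
              + M 1 3 * (M 2 0 * M 3 1 - M 2 1 * M 3 0))
    - M 0 3 * (M 1 0 * (M 2 1 * M 3 2 - M 2 2 * M 3 1)
              - M 1 1 * (M 2 0 * M 3 2 - M 2 2 * M 3 0)
              + M 1 2 * (M 2 0 * M 3 1 - M 2 1 * M 3 0)) := by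
  simp [Matrix.det_succ_row_zero, Fin.sum_univ_succ, Matrix.submatrix_apply, Fin.succAbove,
    show (Fin.succ 2 : Fin 4) = 3 from rfl, show (Fin.castSucc 2 : Fin 4) = 2 from rfl]
  ring

lemma quad_neg_re (a b : ℝ) (ha : 0 < a) (hb : 0 < b) (z : ℂ)
    (h : z ^ 2 + (a : ℂ) * z + (b : ℂ) = 0) : z.re < 0 := by
  by_contra hn
  push_neg at hn
  have hre : (z ^ 2 + (a : ℂ) * z + (b : ℂ)).re = 0 := by rw [h]; rfl
  have him : (z ^ 2 + (a : ℂ) * z + (b : ℂ)).im = 0 := by rw [h]; rfl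
  simp [pow_two, Complex.add_re, Complex.add_im, Complex.mul_re, Complex.mul_im] at hre him
  have h2 : z.im * (2 * z.re + a) = 0 := by nlinarith [him]
  rcases mul_eq_zero.1 h2 with h0 | h0
  · rw [h0] at hre; nlinarith [sq_nonneg z.re]
  · nlinarith

lemma charpoly_eval_fin4 (M : Matrix (Fin 4) (Fin 4) ℂ) (z : ℂ) :
    M.charpoly.eval z =
      (Matrix.of fun i j : Fin 4 => (if i = j then z else 0) - M i j).det := by
  rw [Matrix.charpoly, ← Polynomial.coe_evalRingHom, RingHom.map_det]
  congr 1
  ext i j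
  by_cases hij : i = j <;>
    simp [hij, Matrix.charmatrix_apply_eq, Matrix.charmatrix_apply_ne, Matrix.map_apply]

set_option maxHeartbeats 1600000 in
/-- All eigenvalues of `J(E₃)` have negative real parts if `R_{0w} > 1` and
`μ_w̄ > ρ₂ μ_w`. -/
theorem stmt_7 (μa ψ μwb μw φw ρ2 : ℝ)
    (hμa : 0 < μa) (hψ : 0 < ψ) (hμwb : 0 < μwb) (hμw : 0 < μw)
    (hφw : 0 < φw) (hρ2 : ρ2 ∈ Set.Ico (0:ℝ) 1)
    (R0w : ℝ)
    (hR0w : R0w = φw * ψ / (2 * μw * (μa + ψ)))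
    (J : Matrix (Fin 4) (Fin 4) ℝ)
    (hJ : J = !![-(μa + ψ), 0, ρ2 * φw / R0w, 0;
                 (μa + ψ) * (1 - R0w), -(μa + ψ) * R0w, -(1 - ρ2) * φw / R0w,
                   φw / R0w;
                 ψ / 2, 0, -μwb, 0;
                 0, ψ / 2, 0, -μw])
    (hR : 1 < R0w) (hfit : ρ2 * μw < μwb) :
    ∀ z : ℂ, (J.map (Complex.ofReal)).charpoly.eval z = 0 → z.re < 0 := by
  intro z hz
  have hA : 0 < μa + ψ := by linarith
  have hr0 : 0 < R0w := by linarith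
  have hKψ : (φw / R0w) * ψ = 2 * μw * (μa + ψ) := by
    rw [hR0w]
    field_simp
  have hKC : ((φw : ℂ) / (R0w : ℂ)) * (ψ : ℂ) = 2 * (μw : ℂ) * ((μa : ℂ) + (ψ : ℂ)) := by
    exact_mod_cast congrArg (Complex.ofReal) hKψ
  have hfact : (J.map (Complex.ofReal)).charpoly.eval z
      = (z ^ 2 + ((μw + (μa + ψ) * R0w : ℝ) : ℂ) * z
            + (((μw * (μa + ψ) * (R0w - 1)) : ℝ) : ℂ)) *
        (z ^ 2 + (((μa + ψ + μwb : ℝ)) : ℂ) * z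
            + ((((μa + ψ) * (μwb - ρ2 * μw)) : ℝ) : ℂ)) := by
    rw [charpoly_eval_fin4, my_det_fin_four]
    subst hJ
    simp only [Matrix.of_apply, Matrix.map_apply, Matrix.cons_val_zero, Matrix.cons_val_one,
      Matrix.head_cons, Matrix.cons_val', Matrix.cons_val_fin_one, Matrix.empty_val',
      Matrix.head_fin_const]
    norm_num
    push_cast
    linear_combination
      ( (-(1:ℂ)/2) * (ψ:ℂ) * (μwb:ℂ) + ((1:ℂ)/2) * (ψ:ℂ) * (μw:ℂ) * (ρ2:ℂ)
      + (-(1:ℂ)/2) * (μa:ℂ) * (μwb:ℂ) + ((1:ℂ)/2) * (μa:ℂ) * (μw:ℂ) * (ρ2:ℂ)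
      + (-(1:ℂ)/2) * (R0w:ℂ) * (ψ:ℂ) * (μw:ℂ) * (ρ2:ℂ)
      + (-(1:ℂ)/2) * (R0w:ℂ) * (μa:ℂ) * (μw:ℂ) * (ρ2:ℂ)
      + ((1:ℂ)/4) * ((φw:ℂ) / (R0w:ℂ)) * (ψ:ℂ) * (ρ2:ℂ)
      + (-(1:ℂ)/2) * z * (μwb:ℂ) + (-(1:ℂ)/2) * z * (μw:ℂ) * (ρ2:ℂ)
      + (-(1:ℂ)/2) * z * (ψ:ℂ) + (-(1:ℂ)/2) * z * (μa:ℂ)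
      + (-(1:ℂ)/2) * z * (R0w:ℂ) * (ψ:ℂ) * (ρ2:ℂ)
      + (-(1:ℂ)/2) * z * (R0w:ℂ) * (μa:ℂ) * (ρ2:ℂ)
      + (-(1:ℂ)/2) * z ^ 2 + (-(1:ℂ)/2) * z ^ 2 * (ρ2:ℂ) ) * hKC
  rw [hfact] at hz
  rcases mul_eq_zero.1 hz with h0 | h0
  · refine quad_neg_re _ _ ?_ ?_ _ h0
    · positivity
    · have : 0 < R0w - 1 := by linarith
      positivity
  · refine quad_neg_re _ _ ?_ ?_ _ h0
    · positivity
    · have : 0 < μwb - ρ2 * μw := by linarith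
      positivity
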